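/- arXiv:1507.00498 — 3 statements merged into one kernel-verified Lean document; each statement's English description precedes it below -/
import Mathlib

section
/- For any positive integers Δ and n, the sum over a from 1 to Δ of e^{2πi a n/Δ} equals Δ if Δ divides n, and 0 otherwise. -/
open Complex Finset

theorem roots_of_unity_orthogonality (Δ n : ℕ) (hΔ : 0 < Δ) (hn : 0 < n) :
    ∑ a ∈ Finset.Icc 1 Δ, Complex.exp (2 * Real.pi * Complex.I * a * n / Δ) =
      if (Δ : ℕ) ∣ n then (Δ : ℂ) else 0 := by
  have hΔ0 : (Δ : ℂ) ≠ 0 := Nat.cast_ne_zero.mpr hΔ.ne'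
  set ζ : ℂ := Complex.exp (2 * Real.pi * Complex.I * n / Δ) with hζ
  have hterm : ∀ a : ℕ, Complex.exp (2 * Real.pi * Complex.I * a * n / Δ) = ζ ^ a := by
    intro a
    rw [hζ, ← Complex.exp_nat_mul]
    congr 1
    ring
  have hzpow : ζ ^ Δ = 1 := by
    rw [hζ, ← Complex.exp_nat_mul]
    have : (Δ : ℂ) * (2 * Real.pi * Complex.I * n / Δ) = (n : ℤ) * (2 * Real.pi * Complex.I) := by
      field_simp
      push_cast
      ring
    rw [this, Complex.exp_int_mul_two_pi_mul_I]
  simp only [hterm]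
  by_cases h : Δ ∣ n
  · rw [if_pos h]
    obtain ⟨k, hk⟩ := h
    have hζ1 : ζ = 1 := by
      rw [hζ]
      have : 2 * Real.pi * Complex.I * n / Δ = (k : ℤ) * (2 * Real.pi * Complex.I) := by
        rw [hk]
        push_cast
        field_simp
      rw [this, Complex.exp_int_mul_two_pi_mul_I]
    simp [hζ1, Nat.card_Icc]
  · rw [if_neg h]
    have hζne : ζ ≠ 1 := by
      intro hζ1
      rw [hζ, Complex.exp_eq_one_iff] at hζ1
      obtain ⟨k, hk⟩ := hζ1
      apply h
      have h2 : (2 * (Real.pi : ℂ) * Complex.I) ≠ 0 := by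
        simp [Real.pi_ne_zero, Complex.I_ne_zero]
      have hc : (n : ℂ) = (k : ℂ) * Δ := by
        apply mul_left_cancel₀ h2
        field_simp at hk
        linear_combination (2 * (Real.pi : ℂ) * Complex.I) * hk
      have hn' : (n : ℤ) = k * Δ := by exact_mod_cast hc
      have : (Δ : ℤ) ∣ (n : ℤ) := ⟨k, by linarith⟩
      exact_mod_cast this
    have : Finset.Icc 1 Δ = Finset.Ico 1 (Δ + 1) := by
      rw [Finset.Ico_add_one_right_eq_Icc]
    rw [this, geom_sum_Ico hζne (by omega)]
    rw [pow_succ, hzpow, pow_one]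
    simp
end

section
/- Let W be a square complex matrix of size d×d, suppose π : ℕ → ℕ satisfies n·π(n) = Σ_{d'|n} μ(d')·tr(W^{n/d'}) for all n ≥ 1 (where μ is the Möbius function), and suppose every eigenvalue λ of W satisfies |λ| ≤ 1/R for some real 0 < R < 1. Then for all n ≥ 1, |n·π(n) − tr(W^n)| ≤ d·n·(1/R)^{n/2}. -/
open Module Module.End Set

lemma trace_pow_abs_le (d : ℕ) (W : Matrix (Fin d) (Fin d) ℂ) (C : ℝ)
    (hspec : ∀ lam ∈ spectrum ℂ W, ‖lam‖ ≤ C) (m : ℕ) :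
    ‖(W ^ m).trace‖ ≤ d * C ^ m := by
  classical
  set f : Module.End ℂ (Fin d → ℂ) := Matrix.toLinAlgEquiv' W with hfdef
  have htr : ∀ k : ℕ, (W ^ k).trace = LinearMap.trace ℂ (Fin d → ℂ) (f ^ k) := by
    intro k
    rw [hfdef, ← map_pow, LinearMap.trace_eq_matrix_trace ℂ (Pi.basisFun ℂ (Fin d)),
      LinearMap.toMatrix_eq_toMatrix']
    rw [show (Matrix.toLinAlgEquiv' (W ^ k) : Module.End ℂ (Fin d → ℂ))
        = Matrix.toLin' (W ^ k) from rfl, LinearMap.toMatrix'_toLin']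
  have hspec' : ∀ μ : ℂ, f.maxGenEigenspace μ ≠ ⊥ → ‖μ‖ ≤ C := by
    intro μ hμ
    have h1 : f.HasUnifEigenvalue μ ⊤ := hμ
    have h2 : f.HasEigenvalue μ := h1.lt zero_lt_one
    have h3 : μ ∈ spectrum ℂ f := hasEigenvalue_iff_mem_spectrum.mp h2
    rw [hfdef, AlgEquiv.spectrum_eq Matrix.toLinAlgEquiv' W] at h3
    exact hspec μ h3
  have hind := f.independent_maxGenEigenspace
  have htop := f.iSup_maxGenEigenspace_eq_top
  have hds := DirectSum.isInternal_submodule_of_iSupIndep_of_iSup_eq_top hind htop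
  have h_fin : {μ : ℂ | f.maxGenEigenspace μ ≠ ⊥}.Finite :=
    WellFoundedGT.finite_ne_bot_of_iSupIndep hind
  have hmapsTo : ∀ (μ : ℂ), Set.MapsTo f (f.maxGenEigenspace μ) (f.maxGenEigenspace μ) :=
    fun μ ↦ f.mapsTo_maxGenEigenspace_of_comm rfl μ
  have hmaps : ∀ (k : ℕ) (μ : ℂ),
      Set.MapsTo (f ^ k) (f.maxGenEigenspace μ) (f.maxGenEigenspace μ) :=
    fun k μ ↦ f.mapsTo_maxGenEigenspace_of_comm ((Commute.refl f).pow_right k) μ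
  have key : ∀ (μ : ℂ) (k : ℕ),
      LinearMap.trace ℂ _ ((f ^ k).restrict (hmaps k μ)) =
        μ ^ k * (finrank ℂ (f.maxGenEigenspace μ) : ℂ) := by
    intro μ k
    have hrw : ∀ k : ℕ, (f ^ k).restrict (hmaps k μ) = (f.restrict (hmapsTo μ)) ^ k :=
      fun k ↦ (Module.End.pow_restrict k (hmapsTo μ)).symm
    rw [hrw]
    induction k with
    | zero => simp [LinearMap.trace_one]
    | succ k ih =>
        have hnil := f.isNilpotent_restrict_maxGenEigenspace_sub_algebraMap μ
        have := LinearMap.trace_comp_eq_mul_of_commute_of_isNilpotent μ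
          ((Commute.refl (f.restrict (hmapsTo μ))).pow_left k) hnil
        rw [pow_succ, Module.End.mul_eq_comp, this, ih]
        ring
  have hsum : ∀ k : ℕ, LinearMap.trace ℂ (Fin d → ℂ) (f ^ k)
      = ∑ μ ∈ h_fin.toFinset, μ ^ k * (finrank ℂ (f.maxGenEigenspace μ) : ℂ) := by
    intro k
    rw [LinearMap.trace_eq_sum_trace_restrict' hds h_fin (hmaps k)]
    exact Finset.sum_congr rfl fun μ _ ↦ key μ k
  have hdim : ∑ μ ∈ h_fin.toFinset, (finrank ℂ (f.maxGenEigenspace μ) : ℝ) = (d : ℝ) := by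
    have h0 := (hsum 0).symm
    simp only [pow_zero, one_mul, pow_zero, LinearMap.trace_one] at h0
    have : ((∑ μ ∈ h_fin.toFinset, finrank ℂ (f.maxGenEigenspace μ) : ℕ) : ℂ)
        = ((finrank ℂ (Fin d → ℂ) : ℕ) : ℂ) := by push_cast; rw [h0]
    have hN : (∑ μ ∈ h_fin.toFinset, finrank ℂ (f.maxGenEigenspace μ)) = finrank ℂ (Fin d → ℂ) := Nat.cast_injective this
    rw [← Nat.cast_sum, hN]
    simp [Module.finrank_fin_fun]
  calc ‖(W ^ m).trace‖
      = ‖∑ μ ∈ h_fin.toFinset,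
          μ ^ m * (finrank ℂ (f.maxGenEigenspace μ) : ℂ)‖ := by rw [htr, hsum]
    _ ≤ ∑ μ ∈ h_fin.toFinset,
          ‖μ ^ m * (finrank ℂ (f.maxGenEigenspace μ) : ℂ)‖ :=
        norm_sum_le _ _
    _ ≤ ∑ μ ∈ h_fin.toFinset, C ^ m * (finrank ℂ (f.maxGenEigenspace μ) : ℝ) := by
        refine Finset.sum_le_sum fun μ hμ ↦ ?_
        rw [norm_mul, norm_pow]
        have h1 : ‖μ‖ ≤ C := hspec' μ (by simpa using hμ)
        have h2 : ‖(finrank ℂ (f.maxGenEigenspace μ) : ℂ)‖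
            = (finrank ℂ (f.maxGenEigenspace μ) : ℝ) := by
          simp [Complex.norm_natCast]
        rw [h2]
        gcongr
    _ = C ^ m * ∑ μ ∈ h_fin.toFinset, (finrank ℂ (f.maxGenEigenspace μ) : ℝ) := by
        rw [Finset.mul_sum]
    _ = (d : ℝ) * C ^ m := by rw [hdim]; ring


open Finset

theorem keylemma_c_bound (d : ℕ) (W : Matrix (Fin d) (Fin d) ℂ) (π : ℕ → ℕ) (R : ℝ)
    (hR0 : 0 < R) (hR1 : R < 1)
    (hπ : ∀ n : ℕ, 1 ≤ n →
      (n : ℂ) * (π n : ℂ) =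
        ∑ d' ∈ n.divisors, (ArithmeticFunction.moebius d' : ℂ) * (W ^ (n / d')).trace)
    (hspec : ∀ lam ∈ spectrum ℂ W, ‖lam‖ ≤ 1 / R) :
    ∀ n : ℕ, 1 ≤ n →
      ‖(n : ℂ) * (π n : ℂ) - (W ^ n).trace‖ ≤
        (d : ℝ) * n * (1 / R) ^ ((n : ℝ) / 2) := by
  intro n hn
  have hn0 : n ≠ 0 := by omega
  have h1mem : 1 ∈ n.divisors := Nat.one_mem_divisors.mpr hn0
  have hR1' : (1 : ℝ) ≤ 1 / R := by
    rw [le_div_iff₀ hR0]; linarith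
  have hRC : (0 : ℝ) ≤ 1 / R := by positivity
  have hsplit : (n : ℂ) * (π n : ℂ) - (W ^ n).trace
      = ∑ d' ∈ n.divisors.erase 1,
          (ArithmeticFunction.moebius d' : ℂ) * (W ^ (n / d')).trace := by
    rw [hπ n hn, ← Finset.add_sum_erase _ _ h1mem]
    simp
  rw [hsplit]
  have hterm : ∀ d' ∈ n.divisors.erase 1,
      ‖(ArithmeticFunction.moebius d' : ℂ) * (W ^ (n / d')).trace‖
        ≤ (d : ℝ) * (1 / R) ^ ((n : ℝ) / 2) := by
    intro d' hd'
    obtain ⟨hne1, hdvd⟩ := Finset.mem_erase.mp hd'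
    have hd'2 : 2 ≤ d' := by
      have := Nat.pos_of_mem_divisors hdvd
      omega
    set m := n / d' with hm
    have hm2 : m ≤ n / 2 := Nat.div_le_div_left hd'2 two_pos
    have hmR : (m : ℝ) ≤ (n : ℝ) / 2 :=
      le_trans (Nat.cast_le.mpr hm2) (Nat.cast_div_le)
    have hpow : (1 / R) ^ m ≤ (1 / R) ^ ((n : ℝ) / 2) := by
      rw [← Real.rpow_natCast (1 / R) m]
      exact Real.rpow_le_rpow_of_exponent_le hR1' hmR
    have hmoeb : ‖(ArithmeticFunction.moebius d' : ℂ)‖ ≤ 1 := by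
      rw [show ((ArithmeticFunction.moebius d' : ℤ) : ℂ)
          = ((ArithmeticFunction.moebius d' : ℤ) : ℂ) from rfl, Complex.norm_intCast]
      exact_mod_cast ArithmeticFunction.abs_moebius_le_one
    have htrb : ‖(W ^ m).trace‖ ≤ (d : ℝ) * (1 / R) ^ m :=
      trace_pow_abs_le d W (1 / R) hspec m
    calc ‖(ArithmeticFunction.moebius d' : ℂ) * (W ^ m).trace‖
        = ‖(ArithmeticFunction.moebius d' : ℂ)‖ * ‖(W ^ m).trace‖ :=
          norm_mul _ _
      _ ≤ 1 * ((d : ℝ) * (1 / R) ^ m) := by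
          gcongr
      _ = (d : ℝ) * (1 / R) ^ m := one_mul _
      _ ≤ (d : ℝ) * (1 / R) ^ ((n : ℝ) / 2) := by gcongr
  have hcard : ((n.divisors.erase 1).card : ℝ) ≤ (n : ℝ) := by
    have h1 : n.divisors ⊆ Finset.Icc 1 n := by
      intro a ha
      obtain ⟨hdvd, _⟩ := Nat.mem_divisors.mp ha
      exact Finset.mem_Icc.mpr ⟨Nat.pos_of_mem_divisors ha, Nat.le_of_dvd (by omega) hdvd⟩
    have h2 : (n.divisors.erase 1).card ≤ n := by
      calc (n.divisors.erase 1).card ≤ n.divisors.card := Finset.card_erase_le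
        _ ≤ (Finset.Icc 1 n).card := Finset.card_le_card h1
        _ = n := by rw [Nat.card_Icc]; omega
    exact_mod_cast h2
  calc ‖∑ d' ∈ n.divisors.erase 1,
          (ArithmeticFunction.moebius d' : ℂ) * (W ^ (n / d')).trace‖
      ≤ ∑ d' ∈ n.divisors.erase 1,
          ‖(ArithmeticFunction.moebius d' : ℂ) * (W ^ (n / d')).trace‖ :=
        norm_sum_le _ _
    _ ≤ ∑ _d' ∈ n.divisors.erase 1, (d : ℝ) * (1 / R) ^ ((n : ℝ) / 2) :=
        Finset.sum_le_sum hterm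
    _ = ((n.divisors.erase 1).card : ℝ) * ((d : ℝ) * (1 / R) ^ ((n : ℝ) / 2)) := by
        rw [Finset.sum_const, nsmul_eq_mul]
    _ ≤ (n : ℝ) * ((d : ℝ) * (1 / R) ^ ((n : ℝ) / 2)) := by
        have hp : (0 : ℝ) ≤ (d : ℝ) * (1 / R) ^ ((n : ℝ) / 2) := by positivity
        exact mul_le_mul_of_nonneg_right hcard hp
    _ = (d : ℝ) * n * (1 / R) ^ ((n : ℝ) / 2) := by ring
end

section
/- Let λ_1, …, λ_d be complex numbers and R > 0 real such that {λ_j : |λ_j| = 1/R} consists exactly of the Δ-th roots of unity divided by R (each with multiplicity one), and all other λ_j satisfy |λ_j| ≤ ρ < 1/R. Then as N → ∞, Σ_{n=1}^{N} (1/n)·Σ_{j=1}^{d} (λ_j R)^n = Σ_{m=1}^{⌊N/Δ⌋} 1/m + F + O((ρR)^N), where F := Σ_{|λ_j|<1/R} Σ_{n≥1} (λ_j R)^n/n = log ∏_{|λ_j|<1/R} (1 − λ_j R)^{−1}. -/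
open Finset

lemma geom_like_summable (x : ℂ) (hx : ‖x‖ < 1) :
    Summable fun n : ℕ => x ^ (n + 1) / ((n : ℂ) + 1) := by
  apply Summable.of_norm
  refine Summable.of_nonneg_of_le (fun n => norm_nonneg _) (fun n => ?_)
    ((summable_geometric_of_lt_one (norm_nonneg x) hx).mul_left (‖x‖))
  rw [norm_div, norm_pow]
  have h1 : (1:ℝ) ≤ ‖((n:ℂ)+1)‖ := by
    rw [show ((n:ℂ)+1) = ((n+1 : ℕ):ℂ) by push_cast; ring, Complex.norm_natCast]
    exact_mod_cast Nat.succ_le_succ (Nat.zero_le n)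
  calc ‖x‖ ^ (n+1) / ‖((n:ℂ)+1)‖ ≤ ‖x‖ ^ (n+1) :=
        div_le_self (pow_nonneg (norm_nonneg x) _) h1
    _ = ‖x‖ * ‖x‖ ^ n := by rw [pow_succ]; ring

lemma tail_eq (x : ℂ) (hx : ‖x‖ < 1) (N : ℕ) :
    (∑ n ∈ Icc 1 N, x ^ n / (n:ℂ)) - ∑' n : ℕ, x ^ (n + 1) / ((n:ℂ) + 1)
      = -∑' n : ℕ, x ^ (n + N + 1) / ((n:ℂ) + N + 1) := by
  have hs := geom_like_summable x hx
  have h := Summable.sum_add_tsum_nat_add (f := fun n : ℕ => x ^ (n + 1) / ((n:ℂ) + 1)) N hs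
  have hIcc : ∑ n ∈ Icc 1 N, x ^ n / (n:ℂ) = ∑ i ∈ range N, x ^ (i+1) / ((i:ℂ)+1) := by
    rw [← Finset.Ico_add_one_right_eq_Icc, Finset.sum_Ico_eq_sum_range, show N + 1 - 1 = N from rfl]
    refine Finset.sum_congr rfl fun i _ => ?_
    push_cast
    ring_nf
  have htail : ∑' n : ℕ, x ^ ((n + N) + 1) / ((((n+N):ℕ):ℂ) + 1)
      = ∑' n : ℕ, x ^ (n + N + 1) / ((n:ℂ) + N + 1) := by
    refine tsum_congr fun n => ?_
    push_cast
    ring_nf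
  rw [hIcc]
  rw [htail] at h
  beta_reduce at h
  linear_combination h

lemma tail_bound (x : ℂ) (r : ℝ) (hx : ‖x‖ ≤ r) (hr : r < 1) (N : ℕ) :
    ‖∑' n : ℕ, x ^ (n + N + 1) / ((n:ℂ) + N + 1)‖ ≤ r ^ (N+1) / (1 - r) := by
  have hr0 : 0 ≤ r := le_trans (norm_nonneg x) hx
  have habs : ‖x‖ < 1 := lt_of_le_of_lt hx hr
  have hterm : ∀ n : ℕ, ‖x ^ (n + N + 1) / ((n:ℂ) + N + 1)‖ ≤ r ^ (n + N + 1) := by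
    intro n
    rw [norm_div, norm_pow]
    have h1 : (1:ℝ) ≤ ‖((n:ℂ)+N+1)‖ := by
      rw [show ((n:ℂ)+N+1) = ((n+N+1 : ℕ):ℂ) by push_cast; ring, Complex.norm_natCast]
      exact_mod_cast Nat.succ_le_succ (Nat.zero_le _)
    calc ‖x‖ ^ (n+N+1) / ‖((n:ℂ)+N+1)‖ ≤ ‖x‖ ^ (n+N+1) :=
          div_le_self (pow_nonneg (norm_nonneg x) _) h1
      _ ≤ r ^ (n+N+1) := pow_le_pow_left₀ (norm_nonneg x) hx _
  have hgeom : Summable fun n : ℕ => r ^ (n + N + 1) := by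
    have := (summable_geometric_of_lt_one hr0 hr).mul_left (r ^ (N+1))
    refine this.congr fun n => ?_
    rw [← pow_add]
    ring_nf
  have hsum : Summable fun n : ℕ => x ^ (n + N + 1) / ((n:ℂ) + N + 1) := by
    apply Summable.of_norm
    exact Summable.of_nonneg_of_le (fun n => norm_nonneg _) hterm hgeom
  calc ‖∑' n : ℕ, x ^ (n + N + 1) / ((n:ℂ) + N + 1)‖
      ≤ ∑' n : ℕ, ‖x ^ (n + N + 1) / ((n:ℂ) + N + 1)‖ := norm_tsum_le_tsum_norm hsum.norm
    _ ≤ ∑' n : ℕ, r ^ (n + N + 1) := Summable.tsum_le_tsum hterm hsum.norm hgeom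
    _ = r ^ (N+1) * ∑' n : ℕ, r ^ n := by
        rw [← tsum_mul_left]
        exact tsum_congr fun n => by rw [← pow_add]; ring_nf
    _ = r ^ (N+1) / (1 - r) := by rw [tsum_geometric_of_lt_one hr0 hr]; ring

lemma roots_sum (Δ : ℕ) (hΔ : 1 ≤ Δ) (n : ℕ) :
    ∑ a : Fin Δ, Complex.exp (2 * Real.pi * Complex.I * ((a:ℕ) + 1) / Δ) ^ n
      = if Δ ∣ n then (Δ:ℂ) else 0 := by
  have hΔ0 : Δ ≠ 0 := by omega
  set ζ : ℂ := Complex.exp (2 * Real.pi * Complex.I / Δ) with hζ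
  have hprim : IsPrimitiveRoot ζ Δ := Complex.isPrimitiveRoot_exp Δ hΔ0
  have hterm : ∀ a : Fin Δ, Complex.exp (2 * Real.pi * Complex.I * ((a:ℕ) + 1) / Δ) ^ n
      = (ζ ^ n) ^ ((a:ℕ) + 1) := by
    intro a
    rw [hζ, ← Complex.exp_nat_mul, ← pow_mul, ← Complex.exp_nat_mul]
    congr 1
    push_cast
    ring
  rw [Finset.sum_congr rfl (fun a _ => hterm a)]
  rw [Fin.sum_univ_eq_sum_range (fun i => (ζ ^ n) ^ (i + 1)) Δ]
  by_cases hd : Δ ∣ n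
  · have hw : ζ ^ n = 1 := (hprim.pow_eq_one_iff_dvd n).2 hd
    simp [hw, hd]
  · have hw : ζ ^ n ≠ 1 := fun h => hd ((hprim.pow_eq_one_iff_dvd n).1 h)
    have hwΔ : (ζ ^ n) ^ Δ = 1 := by
      rw [← pow_mul, mul_comm, pow_mul, hprim.pow_eq_one, one_pow]
    have : ∑ i ∈ range Δ, (ζ ^ n) ^ (i + 1) = (ζ ^ n) * ∑ i ∈ range Δ, (ζ ^ n) ^ i := by
      rw [Finset.mul_sum]
      exact Finset.sum_congr rfl fun i _ => by rw [pow_succ]; ring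
    rw [this, geom_sum_eq hw, hwΔ]
    simp [hd]

lemma div_sum (Δ N : ℕ) (hΔ : 1 ≤ Δ) :
    ∑ n ∈ Icc 1 N, (1/(n:ℂ)) * (if Δ ∣ n then (Δ:ℂ) else 0)
      = ∑ m ∈ Icc 1 (N / Δ), (1/(m:ℂ)) := by
  have hΔ0 : 0 < Δ := hΔ
  simp_rw [mul_ite, mul_zero]
  rw [← Finset.sum_filter]
  symm
  refine Finset.sum_nbij' (fun m => Δ * m) (fun n => n / Δ) ?_ ?_ ?_ ?_ ?_
  · intro m hm
    rw [Finset.mem_Icc] at hm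
    rw [Finset.mem_filter, Finset.mem_Icc]
    refine ⟨⟨?_, ?_⟩, ⟨m, rfl⟩⟩
    · show 1 ≤ Δ * m
      exact Nat.one_le_iff_ne_zero.2 (Nat.mul_ne_zero (by omega) (by omega))
    · show Δ * m ≤ N
      rw [mul_comm]; exact (Nat.le_div_iff_mul_le hΔ0).1 hm.2
  · intro n hn
    rw [Finset.mem_filter, Finset.mem_Icc] at hn
    obtain ⟨⟨h1, h2⟩, hd⟩ := hn
    rw [Finset.mem_Icc]
    constructor
    · rw [Nat.le_div_iff_mul_le hΔ0, one_mul]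
      exact Nat.le_of_dvd (by omega) hd
    · exact Nat.div_le_div_right h2
  · intro m hm
    exact Nat.mul_div_cancel_left m hΔ0
  · intro n hn
    rw [Finset.mem_filter] at hn
    exact Nat.mul_div_cancel' hn.2
  · intro m hm
    rw [Finset.mem_Icc] at hm
    have hm0 : (m:ℂ) ≠ 0 := Nat.cast_ne_zero.2 (by omega)
    have hΔ0' : (Δ:ℂ) ≠ 0 := Nat.cast_ne_zero.2 (by omega)
    push_cast
    field_simp

theorem keylemma_b (d Δ : ℕ) (hΔ : 1 ≤ Δ)
    (l : Fin d → ℂ) (R ρ : ℝ) (hR : 0 < R)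
    (e : Fin Δ ↪ Fin d)
    (he : ∀ a : Fin Δ,
      l (e a) = Complex.exp (2 * Real.pi * Complex.I * ((a : ℕ) + 1) / Δ) / R)
    (hsmall : ∀ j : Fin d, j ∉ Set.range e → ‖l j‖ ≤ ρ)
    (hρ : ρ < 1 / R) :
    (fun N : ℕ =>
        (∑ n ∈ Finset.Icc 1 N, (1 / (n : ℂ)) * ∑ j, (l j * R) ^ n) -
          (∑ m ∈ Finset.Icc 1 (N / Δ), (1 / (m : ℂ))) -
          ∑ j ∈ Finset.univ.filter (fun j => ‖l j‖ < 1 / R),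
            ∑' n : ℕ, (l j * R) ^ (n + 1) / ((n : ℂ) + 1)) =O[Filter.atTop]
      (fun N : ℕ => (ρ * R) ^ N) := by
  classical
  have hR0 : (R:ℂ) ≠ 0 := Complex.ofReal_ne_zero.2 hR.ne'
  set S : Finset (Fin d) := Finset.univ \ Finset.univ.map e with hS
  have hmemS : ∀ j, j ∈ S ↔ j ∉ Set.range e := by
    intro j
    simp [hS, Set.mem_range, Finset.mem_sdiff, Finset.mem_map]
  have habs_e : ∀ a : Fin Δ, ‖l (e a)‖ = 1 / R := by
    intro a
    rw [he a, norm_div]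
    congr 1
    · rw [show 2 * (Real.pi:ℂ) * Complex.I * ((a:ℕ) + 1) / Δ
          = ((2 * Real.pi * ((a:ℕ)+1) / Δ : ℝ) : ℂ) * Complex.I by push_cast; ring,
        Complex.norm_exp_ofReal_mul_I]
    · rw [Complex.norm_real, Real.norm_eq_abs]
      exact abs_of_pos hR
  have hfilter : Finset.univ.filter (fun j => ‖l j‖ < 1/R) = S := by
    ext j
    simp only [Finset.mem_filter, Finset.mem_univ, true_and, hmemS]
    constructor
    · intro h
      rintro ⟨a, rfl⟩
      rw [habs_e] at h
      exact lt_irrefl _ h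
    · intro h
      exact lt_of_le_of_lt (hsmall j h) hρ
  set r : ℝ := ρ * R with hrdef
  have hr1 : r < 1 := (lt_div_iff₀ hR).1 hρ
  have hxS : ∀ j ∈ S, ‖l j * R‖ ≤ r := by
    intro j hj
    rw [norm_mul, Complex.norm_real, Real.norm_eq_abs, abs_of_pos hR]
    exact mul_le_mul_of_nonneg_right (hsmall j ((hmemS j).1 hj)) hR.le
  have hxS1 : ∀ j ∈ S, ‖l j * R‖ < 1 := fun j hj => lt_of_le_of_lt (hxS j hj) hr1
  have hsplit : ∀ n : ℕ, ∑ j, (l j * R)^n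
      = (if Δ ∣ n then (Δ:ℂ) else 0) + ∑ j ∈ S, (l j * R)^n := by
    intro n
    have h1 : ∑ j ∈ Finset.univ.map e, (l j * R)^n = if Δ ∣ n then (Δ:ℂ) else 0 := by
      rw [Finset.sum_map]
      have h2 : ∀ a : Fin Δ, (l (e a) * R)^n
          = Complex.exp (2 * Real.pi * Complex.I * ((a:ℕ)+1)/Δ)^n := by
        intro a
        rw [he a, div_mul_cancel₀ _ hR0]
      rw [Finset.sum_congr rfl (fun a _ => h2 a)]
      exact roots_sum Δ hΔ n
    rw [← Finset.sum_sdiff (Finset.subset_univ (Finset.univ.map e)), h1, ← hS, add_comm]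
  have key : ∀ N : ℕ,
      ((∑ n ∈ Finset.Icc 1 N, (1 / (n : ℂ)) * ∑ j, (l j * R) ^ n) -
          (∑ m ∈ Finset.Icc 1 (N / Δ), (1 / (m : ℂ))) -
          ∑ j ∈ Finset.univ.filter (fun j => ‖l j‖ < 1 / R),
            ∑' n : ℕ, (l j * R) ^ (n + 1) / ((n : ℂ) + 1))
      = -∑ j ∈ S, ∑' n : ℕ, (l j * R)^(n+N+1)/((n:ℂ)+N+1) := by
    intro N
    rw [hfilter]
    have hA : ∑ n ∈ Icc 1 N, (1/(n:ℂ)) * ∑ j, (l j * R)^n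
        = (∑ m ∈ Icc 1 (N/Δ), (1/(m:ℂ))) + ∑ j ∈ S, ∑ n ∈ Icc 1 N, (l j * R)^n/(n:ℂ) := by
      have h3 : ∀ n ∈ Icc 1 N, (1/(n:ℂ)) * ∑ j, (l j * R)^n
          = (1/(n:ℂ)) * (if Δ ∣ n then (Δ:ℂ) else 0) + ∑ j ∈ S, (l j * R)^n/(n:ℂ) := by
        intro n hn
        rw [hsplit n, mul_add, Finset.mul_sum]
        congr 1
        exact Finset.sum_congr rfl fun j _ => by rw [one_div, inv_mul_eq_div]
      rw [Finset.sum_congr rfl h3, Finset.sum_add_distrib, div_sum Δ N hΔ, Finset.sum_comm]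
    rw [hA]
    have h4 : ∀ j ∈ S, (∑ n ∈ Icc 1 N, (l j * R)^n/(n:ℂ))
        - ∑' n:ℕ, (l j*R)^(n+1)/((n:ℂ)+1)
        = -∑' n:ℕ, (l j*R)^(n+N+1)/((n:ℂ)+N+1) := fun j hj => tail_eq _ (hxS1 j hj) N
    rw [show ∀ (H P T : ℂ), H + P - H - T = P - T by intros; ring]
    rw [← Finset.sum_sub_distrib, Finset.sum_congr rfl h4, Finset.sum_neg_distrib]
  rw [Asymptotics.isBigO_iff]
  by_cases hρ0 : 0 ≤ ρ
  · have hr0 : 0 ≤ r := mul_nonneg hρ0 hR.le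
    refine ⟨(S.card : ℝ) * r / (1 - r), Filter.Eventually.of_forall fun N => ?_⟩
    have hnorm : ‖(ρ * R) ^ N‖ = r ^ N := by
      rw [Real.norm_eq_abs, abs_of_nonneg (pow_nonneg hr0 N)]
    calc ‖(∑ n ∈ Finset.Icc 1 N, (1 / (n : ℂ)) * ∑ j, (l j * R) ^ n) -
          (∑ m ∈ Finset.Icc 1 (N / Δ), (1 / (m : ℂ))) -
          ∑ j ∈ Finset.univ.filter (fun j => ‖l j‖ < 1 / R),
            ∑' n : ℕ, (l j * R) ^ (n + 1) / ((n : ℂ) + 1)‖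
        = ‖∑ j ∈ S, ∑' n : ℕ, (l j * R)^(n+N+1)/((n:ℂ)+N+1)‖ := by rw [key N, norm_neg]
      _ ≤ ∑ j ∈ S, ‖∑' n : ℕ, (l j * R)^(n+N+1)/((n:ℂ)+N+1)‖ := norm_sum_le _ _
      _ ≤ ∑ _j ∈ S, r^(N+1)/(1-r) :=
          Finset.sum_le_sum fun j hj => tail_bound _ r (hxS j hj) hr1 N
      _ = (S.card : ℝ) * (r^(N+1)/(1-r)) := by rw [Finset.sum_const, nsmul_eq_mul]
      _ = (S.card : ℝ) * r / (1 - r) * r ^ N := by rw [pow_succ]; ring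
      _ = (S.card : ℝ) * r / (1 - r) * ‖(ρ * R) ^ N‖ := by rw [hnorm]
  · refine ⟨0, Filter.Eventually.of_forall fun N => ?_⟩
    have hSempty : S = ∅ := by
      rw [Finset.eq_empty_iff_forall_notMem]
      intro j hj
      have h5 := hsmall j ((hmemS j).1 hj)
      have h6 := norm_nonneg (l j)
      push_neg at hρ0
      linarith
    calc ‖(∑ n ∈ Finset.Icc 1 N, (1 / (n : ℂ)) * ∑ j, (l j * R) ^ n) -
          (∑ m ∈ Finset.Icc 1 (N / Δ), (1 / (m : ℂ))) -
          ∑ j ∈ Finset.univ.filter (fun j => ‖l j‖ < 1 / R),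
            ∑' n : ℕ, (l j * R) ^ (n + 1) / ((n : ℂ) + 1)‖
        = ‖-∑ j ∈ S, ∑' n : ℕ, (l j * R)^(n+N+1)/((n:ℂ)+N+1)‖ := by rw [key N]
      _ = 0 := by rw [hSempty, Finset.sum_empty, neg_zero, norm_zero]
      _ ≤ 0 * ‖(ρ * R) ^ N‖ := by rw [zero_mul]
end
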